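/- Let p = 2^k·q − 1 be prime with k ≥ 2, q an odd prime, m a quadratic non-residue mod p, E: y² = x³ − mx over F_p, and Q ∈ E(F_p) a point with x-coordinate a quadratic non-residue such that 2^k·Q ≠ ∞. Then Q has order exactly 2^k·q, and in particular q·(2^k·Q) = ∞. -/

import Mathlib

/-- The elliptic curve `y² = x³ - m·x` over `ZMod p`. -/
def Emx (p : ℕ) (m : ℤ) : WeierstrassCurve.Affine (ZMod p) :=
  { a₁ := 0, a₂ := 0, a₃ := 0, a₄ := -(m : ZMod p), a₆ := 0 }

section GroupTheory

/-- The `n`-torsion subgroup. -/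
def torsub (n : ℕ) (G : Type*) [AddCommGroup G] : AddSubgroup G where
  carrier := {g | n • g = 0}
  zero_mem' := smul_zero n
  add_mem' := by
    intro a b ha hb
    simp only [Set.mem_setOf_eq, smul_add] at *
    rw [ha, hb, add_zero]
  neg_mem' := by
    intro a ha
    simp only [Set.mem_setOf_eq, smul_neg] at *
    rw [ha, neg_zero]

lemma mem_torsub {G : Type*} [AddCommGroup G] {n : ℕ} {g : G} :
    g ∈ torsub n G ↔ n • g = 0 := Iff.rfl

variable {G : Type*} [AddCommGroup G]

lemma card_torsub_two_pow_le [Finite G] (h2 : Nat.card (torsub 2 G) ≤ 2) (i : ℕ) :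
    Nat.card (torsub (2 ^ i) G) ≤ 2 ^ i := by
  classical
  induction i with
  | zero =>
    have : torsub (2 ^ 0) G = ⊥ := by
      ext g; simp [mem_torsub, AddSubgroup.mem_bot]
    rw [this]
    simp
  | succ i ih =>
    set f : torsub (2 ^ (i + 1)) G → torsub (2 ^ i) G := fun g =>
      ⟨2 • g.1, by
        have hg := g.2
        rw [mem_torsub] at *
        rw [← mul_nsmul, ← pow_succ']
        exact hg⟩ with hfdef
    have hfc : ∀ a, ((f a : G)) = 2 • (a : G) := fun a => rfl
    set s : torsub (2 ^ i) G → torsub (2 ^ (i + 1)) G := fun b => Function.invFun f b with hs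
    set Φ : torsub (2 ^ (i + 1)) G → (torsub (2 ^ i) G) × (torsub 2 G) := fun a =>
      (f a, ⟨(a : G) - (s (f a) : G), by
        rw [mem_torsub, smul_sub]
        have hinv : f (s (f a)) = f a := Function.invFun_eq ⟨a, rfl⟩
        have := congrArg (Subtype.val) hinv
        rw [hfc, hfc] at this
        rw [this, sub_self]⟩) with hΦ
    have hinj : Function.Injective Φ := by
      intro a b hab
      have h1 : f a = f b := congrArg Prod.fst hab
      have h2' := congrArg (fun z => ((Prod.snd z : torsub 2 G) : G)) hab
      simp only [hΦ] at h2'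
      rw [h1] at h2'
      have : (a : G) = (b : G) := by
        have := sub_left_inj.mp h2'
        exact this
      exact Subtype.ext this
    calc Nat.card (torsub (2 ^ (i + 1)) G)
        ≤ Nat.card ((torsub (2 ^ i) G) × (torsub 2 G)) :=
          Nat.card_le_card_of_injective Φ hinj
      _ = Nat.card (torsub (2 ^ i) G) * Nat.card (torsub 2 G) := Nat.card_prod _ _
      _ ≤ 2 ^ i * 2 := Nat.mul_le_mul ih h2
      _ = 2 ^ (i + 1) := by rw [pow_succ]

lemma card_torsub_prime_le [Finite G] {q k : ℕ} (hq : q.Prime) (hqodd : Odd q)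
    (hcard : Nat.card G = 2 ^ k * q) : Nat.card (torsub q G) ≤ q := by
  classical
  have hdvd : Nat.card (torsub q G) ∣ 2 ^ k * q := by
    rw [← hcard]; exact AddSubgroup.card_addSubgroup_dvd_card _
  have hodd : Odd (Nat.card (torsub q G)) := by
    by_contra heven
    rw [Nat.not_odd_iff_even] at heven
    haveI : Fintype (torsub q G) := Fintype.ofFinite _
    obtain ⟨g, hg⟩ := exists_prime_addOrderOf_dvd_card (G := torsub q G) 2
      (by rw [← Nat.card_eq_fintype_card]; exact heven.two_dvd)
    have hgq : q • g = 0 := by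
      apply Subtype.ext
      have := g.2
      rw [mem_torsub] at this
      simpa using this
    have h2q : (2 : ℕ) ∣ q := by
      rw [← hg]
      exact addOrderOf_dvd_iff_nsmul_eq_zero.mpr hgq
    exact (Nat.not_even_iff_odd.mpr hqodd) ((even_iff_two_dvd).mpr h2q)
  have hcop : Nat.Coprime (Nat.card (torsub q G)) (2 ^ k) :=
    Nat.Coprime.pow_right _ (Nat.coprime_two_right.mpr hodd)
  have : Nat.card (torsub q G) ∣ q :=
    hcop.dvd_of_dvd_mul_left hdvd
  exact Nat.le_of_dvd hq.pos this

lemma addsub_eq_of_le_of_card_le [Finite G] {H K : AddSubgroup G} (hle : H ≤ K)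
    (hcard : Nat.card K ≤ Nat.card H) : H = K := by
  apply SetLike.ext'
  apply Set.eq_of_subset_of_ncard_le hle
  rw [← Nat.card_coe_set_eq, ← Nat.card_coe_set_eq]
  exact hcard

/-- The multiplication-by-`n` hom. -/
def nmul (n : ℕ) (G : Type*) [AddCommGroup G] : G →+ G :=
  AddMonoidHom.mk' (fun g => n • g) (fun a b => smul_add n a b)

lemma nmul_ker (n : ℕ) : (nmul n G).ker = torsub n G := by
  ext g
  simp [nmul, AddMonoidHom.mem_ker, mem_torsub, AddMonoidHom.mk'_apply]

lemma card_nmul_range [Finite G] (n : ℕ) :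
    Nat.card (nmul n G).range * Nat.card (torsub n G) = Nat.card G := by
  rw [← nmul_ker, ← Nat.card_congr (QuotientAddGroup.quotientKerEquivRange (nmul n G)).toEquiv]
  exact (AddSubgroup.card_eq_card_quotient_mul_card_addSubgroup _).symm

/-- In a finite abelian group of order `2^k·q` with exactly two `2`-torsion points, any
element killed by `2^(k-1)·q` is divisible by `2`. -/
lemma exists_half [Finite G] {k q : ℕ} (hk : 1 ≤ k) (hq : q.Prime) (hqodd : Odd q)
    (hcard : Nat.card G = 2 ^ k * q) (h2 : Nat.card (torsub 2 G) = 2)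
    (Q : G) (hQ : (2 ^ (k - 1) * q) • Q = 0) : ∃ R : G, 2 • R = Q := by
  classical
  have hpowk : 2 ^ (k - 1) * 2 = 2 ^ k := by
    rw [← pow_succ]; congr 1; omega
  have hrange2 : Nat.card (nmul 2 G).range * 2 = 2 ^ k * q := by
    have := card_nmul_range (G := G) 2
    rw [h2, hcard] at this
    exact this
  have hle : (nmul 2 G).range ≤ torsub (2 ^ (k - 1) * q) G := by
    rintro g ⟨g', rfl⟩
    rw [mem_torsub]
    show (2 ^ (k - 1) * q) • (2 • g') = 0
    rw [← mul_nsmul]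
    have : 2 * (2 ^ (k - 1) * q) = 2 ^ k * q := by
      rw [← mul_assoc, mul_comm 2 (2 ^ (k-1)), hpowk]
    rw [this, ← hcard]
    exact addOrderOf_dvd_iff_nsmul_eq_zero.mp (addOrderOf_dvd_natCard g')
  by_cases hH : Nat.card (torsub (2 ^ (k - 1) * q) G) ≤ 2 ^ (k - 1) * q
  · have hcr : Nat.card (nmul 2 G).range = 2 ^ (k - 1) * q := by
      have := hrange2
      nlinarith [hpowk]
    have : (nmul 2 G).range = torsub (2 ^ (k - 1) * q) G := by
      apply addsub_eq_of_le_of_card_le hle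
      rw [hcr]; exact hH
    have hQmem : Q ∈ (nmul 2 G).range := by
      rw [this, mem_torsub]; exact hQ
    obtain ⟨R, hR⟩ := hQmem
    exact ⟨R, hR⟩
  · exfalso
    push_neg at hH
    have hdvd : Nat.card (torsub (2 ^ (k - 1) * q) G) ∣ 2 ^ k * q := by
      rw [← hcard]; exact AddSubgroup.card_addSubgroup_dvd_card _
    obtain ⟨t, ht⟩ := hdvd
    have hcpos : 0 < Nat.card G := Nat.card_pos
    have htpos : 0 < t := by
      rcases Nat.eq_zero_or_pos t with h0 | h; · rw [h0, mul_zero] at ht; omega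
      exact h
    have ht1 : t = 1 := by
      by_contra ht1
      have h2t : 2 ≤ t := by omega
      have : 2 ^ k * q ≥ Nat.card (torsub (2 ^ (k - 1) * q) G) * 2 :=
        ht ▸ Nat.mul_le_mul_left _ h2t
      nlinarith [hpowk]
    have htop : torsub (2 ^ (k - 1) * q) G = ⊤ := by
      apply AddSubgroup.eq_top_of_card_eq
      rw [hcard, ht, ht1, mul_one]
    have hall : ∀ g : G, (2 ^ (k - 1) * q) • g = 0 := by
      intro g
      have : g ∈ torsub (2 ^ (k - 1) * q) G := htop ▸ AddSubgroup.mem_top g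
      exact this
    have hle2 : (nmul q G).range ≤ torsub (2 ^ (k - 1)) G := by
      rintro g ⟨g', rfl⟩
      rw [mem_torsub]
      show (2 ^ (k - 1)) • (q • g') = 0
      rw [← mul_nsmul, mul_comm]
      exact hall g'
    have hcardq : Nat.card (torsub q G) ≤ q := card_torsub_prime_le hq hqodd hcard
    have hrq : Nat.card (nmul q G).range * Nat.card (torsub q G) = 2 ^ k * q := by
      rw [card_nmul_range, hcard]
    have hqpos : 0 < Nat.card (torsub q G) := Nat.card_pos
    have hrange_ge : 2 ^ k ≤ Nat.card (nmul q G).range := by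
      nlinarith [hrq, hcardq, hqpos]
    have hbound : Nat.card (torsub (2 ^ (k - 1)) G) ≤ 2 ^ (k - 1) :=
      card_torsub_two_pow_le (le_of_eq h2) (k - 1)
    have : Nat.card (nmul q G).range ≤ Nat.card (torsub (2 ^ (k - 1)) G) :=
      AddSubgroup.card_le_of_le hle2
    have hk2 : 2 ^ (k - 1) < 2 ^ k := Nat.pow_lt_pow_right (by norm_num) (by omega)
    omega

end GroupTheory

section Curve

open WeierstrassCurve.Affine WeierstrassCurve Finset

/-- Points of an affine Weierstrass curve are `Option` of nonsingular pairs. -/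
def pointEquiv {F : Type*} [Field F] (W : WeierstrassCurve.Affine F) :
    W.Point ≃ Option {P : F × F // W.Nonsingular P.1 P.2} where
  toFun P := match P with
    | .zero => none
    | @Point.some _ _ _ x y h => some ⟨(x, y), h⟩
  invFun o := match o with
    | none => .zero
    | some ⟨(_, _), h⟩ => .some _ _ h
  left_inv P := by cases P <;> rfl
  right_inv o := by rcases o with _ | ⟨⟨x, y⟩, h⟩ <;> rfl

variable {p : ℕ} [Fact p.Prime] {m : ℤ}

lemma emx_equation_iff (x y : ZMod p) :
    (Emx p m).Equation x y ↔ y ^ 2 = x ^ 3 - (m : ZMod p) * x := by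
  rw [WeierstrassCurve.Affine.equation_iff]
  simp only [Emx]
  constructor <;> intro h <;> linear_combination h

lemma emx_delta : (Emx p m).Δ = 64 * (m : ZMod p) ^ 3 := by
  simp only [WeierstrassCurve.Δ, Emx, b₂, b₄, b₆, b₈]
  ring

lemma zmodTwoNeZero (hp2 : p ≠ 2) : (2 : ZMod p) ≠ 0 := by
  have : ((2 : ℕ) : ZMod p) ≠ 0 := by
    rw [Ne, ZMod.natCast_eq_zero_iff]
    exact fun hdvd => hp2 ((Nat.prime_dvd_prime_iff_eq (Fact.out) Nat.prime_two).mp hdvd)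
  simpa using this

lemma emx_delta_ne_zero (hp2 : p ≠ 2) (hm0 : (m : ZMod p) ≠ 0) : (Emx p m).Δ ≠ 0 := by
  rw [emx_delta]
  have h2 : (2 : ZMod p) ≠ 0 := zmodTwoNeZero hp2
  have h64 : (64 : ZMod p) ≠ 0 := by
    have : (64 : ZMod p) = 2 ^ 6 := by norm_num
    rw [this]
    exact pow_ne_zero _ h2
  exact mul_ne_zero h64 (pow_ne_zero _ hm0)

lemma emx_nonsingular_iff (hp2 : p ≠ 2) (hm0 : (m : ZMod p) ≠ 0) (x y : ZMod p) :
    (Emx p m).Nonsingular x y ↔ y ^ 2 = x ^ 3 - (m : ZMod p) * x := by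
  constructor
  · intro h; exact (emx_equation_iff x y).mp h.1
  · intro h
    exact ((Emx p m).equation_iff_nonsingular_of_Δ_ne_zero (emx_delta_ne_zero hp2 hm0)).mp
      ((emx_equation_iff x y).mpr h)

lemma emx_negY (x y : ZMod p) : (Emx p m).negY x y = -y := by
  simp [Emx, WeierstrassCurve.Affine.negY]

lemma card_affine_sols (hp2 : p ≠ 2) (hp4 : p % 4 = 3) :
    Nat.card {P : ZMod p × ZMod p // P.2 ^ 2 = P.1 ^ 3 - (m : ZMod p) * P.1} = p := by
  classical
  set F := ZMod p
  have hchar : ringChar F ≠ 2 := by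
    rw [ZMod.ringChar_zmod_n]; exact hp2
  set χ := quadraticChar F with hχ
  have hneg1 : χ (-1) = -1 :=
    quadraticChar_neg_one_iff_not_isSquare.mpr
      (by rw [ZMod.exists_sq_eq_neg_one_iff]; simp [hp4])
  set f : F → F := fun x => x ^ 3 - (m : F) * x with hf
  have hline : ∀ a : F, ((Fintype.card {y : F // y ^ 2 = a} : ℤ)) = χ a + 1 := by
    intro a
    have := quadraticChar_card_sqrts hchar a
    rw [Set.toFinset_card] at this
    convert this using 2
    exact Fintype.card_congr (Equiv.refl _)
  have hS : ∑ x : F, χ (f x) = 0 := by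
    have hrev : ∑ x : F, χ (f x) = ∑ x : F, χ (f (-x)) := by
      apply Fintype.sum_bijective (fun x : F => -x) neg_involutive.bijective
      intro x
      rw [neg_neg]
    have hodd : ∀ x : F, χ (f (-x)) = - χ (f x) := by
      intro x
      have : f (-x) = -1 * f x := by simp only [hf]; ring
      rw [this, map_mul, hneg1, neg_one_mul]
    rw [Finset.sum_congr rfl (fun x _ => hodd x), Finset.sum_neg_distrib] at hrev
    linarith
  have e1 : {P : F × F // P.2 ^ 2 = f P.1} ≃ Σ x : F, {y : F // y ^ 2 = f x} :=
    Equiv.subtypeProdEquivSigmaSubtype fun a b => b ^ 2 = f a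
  have : (Nat.card {P : F × F // P.2 ^ 2 = f P.1} : ℤ) = p := by
    rw [Nat.card_congr e1, Nat.card_eq_fintype_card, Fintype.card_sigma]
    push_cast
    rw [Finset.sum_congr rfl (fun x _ => hline (f x))]
    rw [Finset.sum_add_distrib, hS, zero_add]
    simp [F, ZMod.card]
  exact_mod_cast this

lemma card_emx_points (hp2 : p ≠ 2) (hp4 : p % 4 = 3) (hm0 : (m : ZMod p) ≠ 0) :
    Nat.card (Emx p m).Point = p + 1 := by
  haveI : Finite {P : ZMod p × ZMod p // (Emx p m).Nonsingular P.1 P.2} := Subtype.finite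
  haveI : Finite (Option {P : ZMod p × ZMod p // (Emx p m).Nonsingular P.1 P.2}) :=
    Finite.of_equiv _ (Equiv.optionEquivSumPUnit.{0,0} _).symm
  rw [Nat.card_congr (pointEquiv (Emx p m))]
  have e2 : {P : ZMod p × ZMod p // (Emx p m).Nonsingular P.1 P.2} ≃
      {P : ZMod p × ZMod p // P.2 ^ 2 = P.1 ^ 3 - (m : ZMod p) * P.1} :=
    Equiv.subtypeEquivRight (fun P => emx_nonsingular_iff hp2 hm0 P.1 P.2)
  rw [Finite.card_option, Nat.card_congr e2, card_affine_sols hp2 hp4]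

instance : Finite (Emx p m).Point := by
  haveI : Finite {P : ZMod p × ZMod p // (Emx p m).Nonsingular P.1 P.2} := Subtype.finite
  haveI : Finite (Option {P : ZMod p × ZMod p // (Emx p m).Nonsingular P.1 P.2}) :=
    Finite.of_equiv _ (Equiv.optionEquivSumPUnit.{0,0} _).symm
  exact Finite.of_equiv _ (pointEquiv (Emx p m)).symm

lemma emx_two_torsion (hp2 : p ≠ 2) (hm0 : (m : ZMod p) ≠ 0)
    (hm : ¬ IsSquare (m : ZMod p)) :
    Nat.card (torsub 2 (Emx p m).Point) = 2 := by
  classical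
  have h00 : (Emx p m).Nonsingular 0 0 := (emx_nonsingular_iff hp2 hm0 0 0).mpr (by ring)
  have hset : ((torsub 2 (Emx p m).Point : AddSubgroup _) : Set _)
      = {0, Point.some _ _ h00} := by
    ext P
    simp only [SetLike.mem_coe, mem_torsub, Set.mem_insert_iff, Set.mem_singleton_iff]
    constructor
    · intro hP
      rw [two_nsmul] at hP
      cases P with
      | zero => left; rfl
      | @some x y h' =>
        right
        by_cases hy : y = (Emx p m).negY x y
        · rw [emx_negY] at hy
          have hy0 : y = 0 := by
            have h2y : (2 : ZMod p) * y = 0 := by linear_combination hy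
            rcases mul_eq_zero.mp h2y with h | h
            · exact absurd h (zmodTwoNeZero hp2)
            · exact h
          have heq : y ^ 2 = x ^ 3 - (m : ZMod p) * x :=
            (emx_nonsingular_iff hp2 hm0 x y).mp h'
          have hx0 : x = 0 := by
            have : x * (x ^ 2 - (m : ZMod p)) = 0 := by
              linear_combination y * hy0 - heq
            rcases mul_eq_zero.mp this with h | h
            · exact h
            · exfalso
              apply hm
              exact ⟨x, by linear_combination -h⟩
          subst hx0; subst hy0
          rfl
        · rw [Point.add_self_of_Y_ne hy] at hP
          exact absurd hP (Point.some_ne_zero _)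
    · intro hP
      rcases hP with rfl | rfl
      · rw [two_nsmul, add_zero]
      · rw [two_nsmul]
        exact Point.add_self_of_Y_eq (by rw [emx_negY]; ring)
  calc Nat.card (torsub 2 (Emx p m).Point)
      = Nat.card ((torsub 2 (Emx p m).Point : Set (Emx p m).Point)) := rfl
    _ = Nat.card ({0, Point.some _ _ h00} : Set (Emx p m).Point) :=
        Nat.card_congr (Equiv.setCongr hset)
    _ = ({0, Point.some _ _ h00} : Set (Emx p m).Point).ncard := Nat.card_coe_set_eq _
    _ = 2 := Set.ncard_pair (Ne.symm (Point.some_ne_zero h00))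

lemma emx_isSquare_of_double (hp2 : p ≠ 2) (hm0 : (m : ZMod p) ≠ 0)
    {x y : ZMod p} (h : (Emx p m).Nonsingular x y)
    {R : (Emx p m).Point} (hR : 2 • R = Point.some _ _ h) : IsSquare x := by
  classical
  cases R with
  | zero =>
    exfalso
    simp only [← Point.zero_def, smul_zero] at hR
    exact Point.some_ne_zero h hR.symm
  | @some x' y' h' =>
    rw [two_nsmul] at hR
    by_cases hy : y' = (Emx p m).negY x' y'
    · rw [Point.add_self_of_Y_eq hy] at hR
      exact absurd hR.symm (Point.some_ne_zero h)
    · rw [Point.add_self_of_Y_ne hy] at hR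
      -- extract the x-coordinate equality
      have hxeq : (Emx p m).addX x' x' ((Emx p m).slope x' x' y' y') = x := by
        have := hR
        injection this with h1 h2
      have hy' : y' ≠ 0 := by
        intro h0
        apply hy
        rw [emx_negY, h0, neg_zero]
      have h2y : (2 : ZMod p) * y' ≠ 0 := mul_ne_zero (zmodTwoNeZero hp2) hy'
      have heq : y' ^ 2 = x' ^ 3 - (m : ZMod p) * x' :=
        (emx_nonsingular_iff hp2 hm0 x' y').mp h'
      have hslope : (Emx p m).slope x' x' y' y'
          = (3 * x' ^ 2 - (m : ZMod p)) / (2 * y') := by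
        rw [slope_of_Y_ne rfl hy]
        rw [emx_negY]
        simp only [Emx]
        ring_nf
      refine ⟨(x' ^ 2 + (m : ZMod p)) / (2 * y'), ?_⟩
      rw [← hxeq, hslope]
      simp only [WeierstrassCurve.Affine.addX, Emx]
      have key : (x' ^ 2 + (m : ZMod p)) ^ 2 = (3 * x' ^ 2 - (m : ZMod p)) ^ 2 - 2 * x' * (2 * y') ^ 2 := by
        linear_combination (8 * x') * heq
      rw [div_mul_div_comm, ← sq (x' ^ 2 + (m : ZMod p)), ← sq (2 * y'), key]
      rw [sub_div _ (2 * x' * (2 * y') ^ 2), mul_div_assoc (2 * x'), div_self (pow_ne_zero 2 h2y)]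
      have h4 : (2 : ZMod p)⁻¹ ^ 2 = 4⁻¹ := by rw [inv_pow]; norm_num
      linear_combination (-x' ^ 2 * (m : ZMod p) * y'⁻¹ ^ 2 * 6 + x' ^ 4 * y'⁻¹ ^ 2 * 9 + (m : ZMod p) ^ 2 * y'⁻¹ ^ 2) * h4

end Curve

/-- Let `p = 2^k·q − 1` be prime with `k ≥ 2`, `q` an odd prime, `m` a quadratic
non-residue mod `p`, and `Q ∈ E(F_p)` an affine point with `x`-coordinate a
quadratic non-residue such that `2^k·Q ≠ ∞`.  Then `Q` has order exactly `2^k·q`,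
and in particular `q·(2^k·Q) = ∞`. -/
theorem stmt_15 (k q p : ℕ) (hk : 2 ≤ k) (hq : q.Prime) (hqodd : Odd q)
    (hp : p = 2 ^ k * q - 1) [Fact p.Prime]
    (m : ℤ) (hm0 : (m : ZMod p) ≠ 0) (hm : ¬ IsSquare (m : ZMod p))
    (x y : ZMod p) (h : (Emx p m).Nonsingular x y) (hx : ¬ IsSquare x)
    (h2k : 2 ^ k • (WeierstrassCurve.Affine.Point.some x y h) ≠ 0) :
    addOrderOf (WeierstrassCurve.Affine.Point.some x y h) = 2 ^ k * q ∧
    q • (2 ^ k • WeierstrassCurve.Affine.Point.some x y h) = 0 := by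
  classical
  -- arithmetic facts about `p`
  have hq2 : 2 ≤ q := hq.two_le
  have hkq : 8 ≤ 2 ^ k * q := by
    calc 8 = 4 * 2 := by norm_num
    _ ≤ 2 ^ k * q := Nat.mul_le_mul (by calc 4 = 2 ^ 2 := by norm_num
          _ ≤ 2 ^ k := Nat.pow_le_pow_right (by norm_num) hk) hq2
  have h4dvd : 4 ∣ 2 ^ k * q := by
    refine Dvd.dvd.mul_right ?_ q
    have : (4 : ℕ) = 2 ^ 2 := by norm_num
    rw [this]
    exact pow_dvd_pow 2 hk
  have hp4 : p % 4 = 3 := by omega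
  have hp2 : p ≠ 2 := by omega
  have hp1 : p + 1 = 2 ^ k * q := by omega
  -- the group order
  have hcard : Nat.card (Emx p m).Point = 2 ^ k * q := by
    rw [card_emx_points hp2 hp4 hm0, hp1]
  set Q := WeierstrassCurve.Affine.Point.some x y h with hQdef
  set n := addOrderOf Q with hn
  have hdvd : n ∣ 2 ^ k * q := hcard ▸ addOrderOf_dvd_natCard Q
  have hndvd2k : ¬ n ∣ 2 ^ k := fun hd =>
    h2k (addOrderOf_dvd_iff_nsmul_eq_zero.mp hd)
  have hqn : q ∣ n := by
    by_contra hqn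
    exact hndvd2k (Nat.Coprime.dvd_of_dvd_mul_right
      ((hq.coprime_iff_not_dvd.mpr hqn).symm) hdvd)
  have h2kn : 2 ^ k ∣ n := by
    by_contra h2kn
    -- then n divides 2^(k-1) * q
    have hn' : n ∣ 2 ^ (k - 1) * q := by
      obtain ⟨c, d, hc, hd, hcd⟩ := exists_dvd_and_dvd_of_dvd_mul hdvd
      obtain ⟨a, hak, hca⟩ := (Nat.dvd_prime_pow Nat.prime_two).mp hc
      subst hca
      have ha : a ≤ k - 1 := by
        by_contra h'
        apply h2kn
        rw [hcd]
        exact Dvd.dvd.mul_right (pow_dvd_pow 2 (by omega : k ≤ a)) d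
      rw [hcd]
      exact mul_dvd_mul (pow_dvd_pow 2 ha) hd
    have hQ0 : (2 ^ (k - 1) * q) • Q = 0 := addOrderOf_dvd_iff_nsmul_eq_zero.mp hn'
    obtain ⟨R, hR⟩ := exists_half (by omega : 1 ≤ k) hq hqodd hcard
      (emx_two_torsion hp2 hm0 hm) Q hQ0
    exact hx (emx_isSquare_of_double hp2 hm0 h hR)
  have hcop : Nat.Coprime (2 ^ k) q :=
    Nat.Coprime.pow_left _ (Nat.coprime_two_left.mpr hqodd)
  have hfull : 2 ^ k * q ∣ n := hcop.mul_dvd_of_dvd_of_dvd h2kn hqn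
  have hneq : n = 2 ^ k * q := Nat.dvd_antisymm hdvd hfull
  refine ⟨hneq, ?_⟩
  rw [← mul_nsmul]
  exact addOrderOf_dvd_iff_nsmul_eq_zero.mp hdvd
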